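/- Let P be a directed partial order and κ a regular cardinal. Then P fails to have calibre κ if and only if P ≥_T κ (κ taken with its usual ordering). -/

import Mathlib

universe u

open Cardinal Set

namespace TukeySpec

/-- A subset `S` of a preorder is cofinal if every element has an upper bound in `S`. -/
def IsCofinal {P : Type*} [Preorder P] (S : Set P) : Prop :=
  ∀ p : P, ∃ s ∈ S, p ≤ s

/-- `Q` is a Tukey quotient of `P` (i.e. `P ≥_T Q`): there is a map `P → Q`
sending cofinal sets to cofinal sets. -/
def TukeyQuot (P : Type*) (Q : Type*) [Preorder P] [Preorder Q] : Prop :=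
  ∃ φ : P → Q, ∀ S : Set P, IsCofinal S → IsCofinal (φ '' S)

/-- `P` has calibre `(κ, l, m)`. -/
def Calibre (P : Type u) [Preorder P] (κ l m : Cardinal.{u}) : Prop :=
  ∀ P' : Set P, #P' = κ → ∃ R ⊆ P', #R = l ∧ ∀ B ⊆ R, #B = m → BddAbove B

/-- `P` has calibre `κ` (the simplified form): every `κ`-sized subset has a
`κ`-sized subset which is bounded in `P`. -/
def CalibreSimple (P : Type u) [Preorder P] (κ : Cardinal.{u}) : Prop :=
  ∀ P' : Set P, #P' = κ → ∃ R ⊆ P', #R = κ ∧ BddAbove R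

/-- The Tukey spectrum of a poset: all regular cardinals `κ` with `P ≥_T κ`,
where `κ` carries its usual (ordinal) ordering. -/
def specPoset (P : Type u) [Preorder P] : Set Cardinal.{u} :=
  {κ | κ.IsRegular ∧ TukeyQuot P ↥(Set.Iio κ.ord)}

/-- The product `∏A` of a set of cardinals: all functions on `A` with
`f a < a` (as ordinals). -/
def piSet (A : Set Cardinal.{0}) : Set (↥A → Ordinal.{0}) :=
  {f | ∀ a : ↥A, f a < (a : Cardinal).ord}

/-- A family of members of `∏A` is bounded if it has an upper bound in `(∏A, ≤)`
(pointwise order). -/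
def BddIn (A : Set Cardinal.{0}) (S : Set (↥A → Ordinal.{0})) : Prop :=
  ∃ h ∈ piSet A, ∀ f ∈ S, ∀ a : ↥A, f a ≤ h a

/-- The Tukey spectrum of a set `A` of regular cardinals: all regular `κ` for which
there is a `κ`-sized family `F ⊆ ∏A` all of whose `κ`-sized subfamilies are
unbounded in `(∏A, ≤)`. -/
def spec (A : Set Cardinal.{0}) : Set Cardinal.{0} :=
  {κ | κ.IsRegular ∧ ∃ F ⊆ piSet A, #F = Cardinal.lift.{1} κ ∧
    ∀ F₀ ⊆ F, #F₀ = Cardinal.lift.{1} κ → ¬ BddIn A F₀}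

/-- `cf(∏A/D)`: the least cardinality of a subset of `∏A` which is cofinal
modulo the ultrafilter `D`. -/
noncomputable def cofUlt (A : Set Cardinal.{0}) (D : Ultrafilter ↥A) : Cardinal.{1} :=
  sInf {c : Cardinal.{1} | ∃ S ⊆ piSet A, #S = c ∧
    ∀ f ∈ piSet A, ∃ g ∈ S, {a : ↥A | f a ≤ g a} ∈ D}

/-- `pcf(A)`: the set of all cofinalities `cf(∏A/D)` as `D` ranges over
ultrafilters on `A`. -/
def pcf (A : Set Cardinal.{0}) : Set Cardinal.{0} :=
  {κ | ∃ D : Ultrafilter ↥A, Cardinal.lift.{1} κ = cofUlt A D}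

/-- `ub(F)`: the set of coordinates `a ∈ A` where the family `F` is unbounded. -/
def ub (A : Set Cardinal.{0}) (F : Set (↥A → Ordinal.{0})) : Set ↥A :=
  {a | ∀ β < (a : Cardinal).ord, ∃ f ∈ F, β < f a}

/-- The strong part of the Tukey spectrum: `l ∈ spec*(A)` iff there is an
`l`-sized family `F ⊆ ∏A` such that every `l`-sized subfamily has a set of
unbounded coordinates which is unbounded in `sup A`. -/
def specStarMem (A : Set Cardinal.{0}) (l : Cardinal.{0}) : Prop :=
  l.IsRegular ∧ ∃ F ⊆ piSet A, #F = Cardinal.lift.{1} l ∧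
    ∀ F₀ ⊆ F, #F₀ = Cardinal.lift.{1} l →
      ∀ β < sSup A, ∃ a ∈ ub A F₀, β < (a : Cardinal)

/-- `κ` is a limit point of the set `X` of cardinals. -/
def IsLimitPt (X : Set Cardinal.{0}) (κ : Cardinal.{0}) : Prop :=
  ∀ β < κ, ∃ x ∈ X, β < x ∧ x < κ

/-- `C` is a closed unbounded subset of `κ`. -/
def IsClubIn (C : Set Ordinal.{0}) (κ : Ordinal.{0}) : Prop :=
  C ⊆ Set.Iio κ ∧ (∀ β < κ, ∃ o ∈ C, β < o) ∧
    ∀ β < κ, β ≠ 0 → (∀ γ < β, ∃ o ∈ C, γ < o ∧ o < β) → β ∈ C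

/-- A set `S` of cardinals is stationary in `κ`: it meets every club of `κ`. -/
def StatIn (S : Set Cardinal.{0}) (κ : Cardinal.{0}) : Prop :=
  ∀ C : Set Ordinal.{0}, IsClubIn C κ.ord → ∃ a ∈ S, a.ord ∈ C

/-- `κ` is Mahlo: strongly inaccessible and the regular cardinals below `κ`
are stationary in `κ`. -/
def IsMahlo (κ : Cardinal.{0}) : Prop :=
  κ.IsInaccessible ∧ StatIn {a | a < κ ∧ a.IsRegular} κ

/-- `κ` is weakly compact: strongly inaccessible and `κ → (κ)²₂`. -/
def IsWeaklyCompact (κ : Cardinal.{0}) : Prop :=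
  κ.IsInaccessible ∧
    ∀ c : Ordinal.{0} → Ordinal.{0} → Bool,
      ∃ H ⊆ Set.Iio κ.ord, #H = Cardinal.lift.{1} κ ∧
        ∃ b : Bool, ∀ α ∈ H, ∀ β ∈ H, α < β → c α β = b

/-- `θ` carries a Jónsson algebra: there is `F` from finite subsets of `θ` to `θ`
such that `F` applied to finite subsets of any `θ`-sized `H ⊆ θ` covers `θ`. -/
def CarriesJonsson (θ : Cardinal.{0}) : Prop :=
  ∃ F : Finset Ordinal.{0} → Ordinal.{0},
    (∀ s : Finset Ordinal.{0}, (↑s : Set Ordinal) ⊆ Set.Iio θ.ord → F s < θ.ord) ∧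
    ∀ H ⊆ Set.Iio θ.ord, #H = Cardinal.lift.{1} θ →
      ∀ γ < θ.ord, ∃ s : Finset Ordinal.{0}, (↑s : Set Ordinal) ⊆ H ∧ F s = γ

/-- `cf(∏A/J_bd)`: the least cardinality of a subset of `∏A` cofinal modulo
the ideal of bounded subsets of `A`. -/
noncomputable def cofJbd (A : Set Cardinal.{0}) : Cardinal.{1} :=
  sInf {c : Cardinal.{1} | ∃ S ⊆ piSet A, #S = c ∧
    ∀ f ∈ piSet A, ∃ g ∈ S, ∃ b < sSup A, ∀ a : ↥A, b < (a : Cardinal) → f a ≤ g a}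

/-- `μ` is a limit cardinal. -/
def IsLimitCard (μ : Cardinal.{0}) : Prop :=
  ℵ₀ ≤ μ ∧ ∀ ν < μ, Order.succ ν < μ

instance instIsWellOrderToTypeLT (o : Ordinal.{u}) : IsWellOrder o.ToType (· < ·) :=
  isWellOrder_lt

/-- For a directed partial order `P` and a regular cardinal `κ`,
`P` fails to have calibre `κ` iff `P ≥_T κ` (with its usual ordering). -/
theorem statement1 {P : Type u} [PartialOrder P] (hPd : IsDirected P (· ≤ ·))
    (κ : Cardinal.{u}) (hreg : κ.IsRegular) :
    ¬ CalibreSimple P κ ↔ TukeyQuot P ↥(Set.Iio κ.ord) := by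
  have hκord : Order.IsSuccLimit κ.ord := Cardinal.isSuccLimit_ord hreg.aleph0_le
  have hτlt : ∀ t : κ.ord.ToType, Ordinal.typein (α := κ.ord.ToType) (· < ·) t < κ.ord :=
    fun t => Ordinal.typein_lt_self t
  constructor
  · -- ¬ Calibre → Tukey quotient
    intro hcal
    simp only [CalibreSimple] at hcal
    push_neg at hcal
    obtain ⟨P', hP', hbad⟩ := hcal
    have hT : (#κ.ord.ToType) = #↥P' := by
      rw [Cardinal.mk_ord_toType, hP']
    obtain ⟨e⟩ := Cardinal.eq.mp hT
    -- for each `p`, the set of indices below `p` has size `< κ`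
    have hA : ∀ p : P, #↥{t : κ.ord.ToType | (e t : P) ≤ p} < κ := by
      intro p
      have hBsub : {x : P | x ∈ P' ∧ x ≤ p} ⊆ P' := fun x hx => hx.1
      have hBbdd : BddAbove {x : P | x ∈ P' ∧ x ≤ p} := ⟨p, fun x hx => hx.2⟩
      have hBne : #↥{x : P | x ∈ P' ∧ x ≤ p} ≠ κ := fun h => hbad _ hBsub h hBbdd
      have hBle : #↥{x : P | x ∈ P' ∧ x ≤ p} ≤ κ := hP' ▸ Cardinal.mk_le_mk_of_subset hBsub
      have hAB : #↥{t : κ.ord.ToType | (e t : P) ≤ p} ≤ #↥{x : P | x ∈ P' ∧ x ≤ p} := by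
        refine Cardinal.mk_le_of_injective (f := fun t => ⟨(e t.1 : P), (e t.1).2, t.2⟩) ?_
        intro a b hab
        have := congrArg Subtype.val hab
        simp only at this
        exact Subtype.ext (e.injective (Subtype.ext this))
      exact hAB.trans_lt (lt_of_le_of_ne hBle hBne)
    have hφlt : ∀ p : P,
        (⨆ t : ↥{t : κ.ord.ToType | (e t : P) ≤ p},
          Ordinal.typein (α := κ.ord.ToType) (· < ·) t.1 + 1) < κ.ord := by
      intro p
      refine Cardinal.iSup_lt_ord_of_isRegular hreg (hA p) (fun t => ?_)
      rw [Ordinal.add_one_eq_succ]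
      exact hκord.succ_lt (hτlt t.1)
    refine ⟨fun p => ⟨_, hφlt p⟩, ?_⟩
    rintro S hS ⟨β, hβ⟩
    set t : κ.ord.ToType :=
      Ordinal.enum (α := κ.ord.ToType) (· < ·) ⟨β, by rw [Ordinal.type_toType]; exact hβ⟩ with htdef
    obtain ⟨s, hsS, hps⟩ := hS (e t : P)
    refine ⟨_, Set.mem_image_of_mem _ hsS, ?_⟩
    have hle : Ordinal.typein (α := κ.ord.ToType) (· < ·) t + 1 ≤
        ⨆ t' : ↥{t' : κ.ord.ToType | (e t' : P) ≤ s},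
          Ordinal.typein (α := κ.ord.ToType) (· < ·) t'.1 + 1 :=
      Ordinal.le_iSup _ (⟨t, hps⟩ : ↥{t' : κ.ord.ToType | (e t' : P) ≤ s})
    have hteq : Ordinal.typein (α := κ.ord.ToType) (· < ·) t = β := Ordinal.typein_enum _ _
    refine Subtype.mk_le_mk.mpr ?_
    calc β ≤ β + 1 := le_of_lt (lt_add_one β)
    _ = Ordinal.typein (α := κ.ord.ToType) (· < ·) t + 1 := by rw [hteq]
    _ ≤ _ := hle
  · -- Tukey quotient → ¬ Calibre
    rintro ⟨Φ, hΦ⟩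
    have step1 : ∀ β < κ.ord, ∃ p : P, ∀ q : P, p ≤ q → β ≤ (Φ q : Ordinal) := by
      intro β hβ
      by_contra hcon
      push_neg at hcon
      have hD : IsCofinal {q : P | (Φ q : Ordinal) < β} := by
        intro p
        obtain ⟨q, h1, h2⟩ := hcon p
        exact ⟨q, h2, h1⟩
      obtain ⟨s, hs, hle⟩ := hΦ _ hD ⟨β, hβ⟩
      obtain ⟨q, hq, rfl⟩ := hs
      exact absurd (lt_of_le_of_lt (Subtype.mk_le_mk.mp hle) hq) (lt_irrefl β)
    choose g hg using fun t : κ.ord.ToType =>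
      step1 (Ordinal.typein (α := κ.ord.ToType) (· < ·) t) (hτlt t)
    have hub : #↥(Set.range g) ≤ κ := by
      have := Cardinal.mk_range_le (f := g)
      rwa [Cardinal.mk_ord_toType] at this
    have hΦsucc : ∀ p : P, (Φ p : Ordinal) + 1 < κ.ord := by
      intro p
      rw [Ordinal.add_one_eq_succ]
      exact hκord.succ_lt (Φ p).2
    have hlb : κ ≤ #↥(Set.range g) := by
      by_contra hcon
      push_neg at hcon
      have hsup : (⨆ x : ↥(Set.range g), (Φ (x : P) : Ordinal) + 1) < κ.ord :=
        Cardinal.iSup_lt_ord_of_isRegular hreg hcon (fun x => hΦsucc _)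
      set β := ⨆ x : ↥(Set.range g), (Φ (x : P) : Ordinal) + 1 with hβdef
      set t : κ.ord.ToType :=
        Ordinal.enum (α := κ.ord.ToType) (· < ·) ⟨β, by rw [Ordinal.type_toType]; exact hsup⟩
        with htdef
      have hteq : Ordinal.typein (α := κ.ord.ToType) (· < ·) t = β := Ordinal.typein_enum _ _
      have h1 : β ≤ (Φ (g t) : Ordinal) := hteq ▸ hg t (g t) le_rfl
      have h2 : (Φ (g t) : Ordinal) + 1 ≤ β :=
        Ordinal.le_iSup (fun x : ↥(Set.range g) => (Φ (x : P) : Ordinal) + 1)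
          ⟨g t, Set.mem_range_self t⟩
      exact absurd ((lt_of_le_of_lt h1 (lt_add_one _)).trans_le h2) (lt_irrefl β)
    intro hcs
    obtain ⟨R, hRP', hRcard, b, hb⟩ := hcs (Set.range g) (le_antisymm hub hlb)
    -- every index of an element of R is bounded by Φ b
    have hK : ∀ t : κ.ord.ToType, g t ∈ R →
        Ordinal.typein (α := κ.ord.ToType) (· < ·) t ≤ (Φ b : Ordinal) :=
      fun t ht => hg t b (hb ht)
    have h1 : κ ≤ #↥{t : κ.ord.ToType | g t ∈ R} := by
      have hRK : R ⊆ g '' {t : κ.ord.ToType | g t ∈ R} := by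
        intro r hr
        obtain ⟨t, rfl⟩ := hRP' hr
        exact ⟨t, hr, rfl⟩
      calc κ = #↥R := hRcard.symm
      _ ≤ #↥(g '' {t : κ.ord.ToType | g t ∈ R}) := Cardinal.mk_le_mk_of_subset hRK
      _ ≤ #↥{t : κ.ord.ToType | g t ∈ R} := Cardinal.mk_image_le
    have h2 : #↥{t : κ.ord.ToType | g t ∈ R} ≤ ((Φ b : Ordinal) + 1).card := by
      rw [← Cardinal.mk_toType]
      refine Cardinal.mk_le_of_injective (f := fun t : ↥{t : κ.ord.ToType | g t ∈ R} =>
        Ordinal.enum (α := ((Φ b : Ordinal) + 1).ToType) (· < ·)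
          ⟨Ordinal.typein (α := κ.ord.ToType) (· < ·) t.1, by
            rw [Ordinal.type_toType]; exact lt_of_le_of_lt (hK t.1 t.2) (lt_add_one _)⟩) ?_
      intro a b hab
      have h4 := congrArg Subtype.val (Ordinal.enum_inj.mp hab)
      simp only at h4
      exact Subtype.ext ((Ordinal.typein (α := κ.ord.ToType) (· < ·)).injective h4)
    have h3 : ((Φ b : Ordinal) + 1).card < κ := Cardinal.lt_ord.mp (hΦsucc b)
    exact absurd ((h1.trans h2).trans_lt h3) (lt_irrefl κ)

end TukeySpec
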